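/- There exist a > 0 and b > 2π such that the function f(x) = 1/2 + (1/2)·e^{−ax}·sin(bx) satisfies both f'(x) = f(x) − f(x−1) and f(x) = ∫_{x−1}^x f(s) ds for all real x. -/

import Mathlib

open Real

/-- Existence of a root of `e^a sin b = b`, `e^a cos b = 1 + a` with `a > 0`, `b > 2π`. -/
lemma stmt3_root : ∃ a b : ℝ, 0 < a ∧ 2*π < b ∧
    Real.exp a * Real.sin b = b ∧ Real.exp a * Real.cos b = 1 + a := by
  set g : ℝ → ℝ := fun b => b * Real.cos b - (1 + Real.log (b / Real.sin b)) * Real.sin b with hg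
  have hpi : (0:ℝ) < π := pi_pos
  have hsin : ∀ b ∈ Set.Icc (9*π/4) (5*π/2), 0 < Real.sin b := by
    intro b hb
    have h2 : Real.sin (b - 2*π + 2*π) = Real.sin (b - 2*π) := Real.sin_add_two_pi _
    rw [show b = b - 2*π + 2*π by ring, h2]
    apply Real.sin_pos_of_pos_of_lt_pi <;> nlinarith [hb.1, hb.2]
  -- continuity of g on the interval
  have hcont : ContinuousOn g (Set.Icc (9*π/4) (5*π/2)) := by
    apply ContinuousOn.sub
    · exact (continuous_id.mul Real.continuous_cos).continuousOn
    · apply ContinuousOn.mul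
      · apply ContinuousOn.add continuousOn_const
        apply ContinuousOn.log
        · exact ContinuousOn.div continuousOn_id Real.continuous_sin.continuousOn
            (fun b hb => (hsin b hb).ne')
        · intro b hb
          have := hsin b hb
          have hb1 : (0:ℝ) < b := by nlinarith [hb.1]
          positivity
      · exact Real.continuous_sin.continuousOn
  -- endpoint values
  have hle : 9*π/4 ≤ 5*π/2 := by nlinarith
  have hs1 : Real.sin (9*π/4) = Real.sqrt 2 / 2 := by
    rw [show (9*π/4 : ℝ) = π/4 + 2*π by ring, Real.sin_add_two_pi, Real.sin_pi_div_four]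
  have hc1 : Real.cos (9*π/4) = Real.sqrt 2 / 2 := by
    rw [show (9*π/4 : ℝ) = π/4 + 2*π by ring, Real.cos_add_two_pi, Real.cos_pi_div_four]
  have hs2 : Real.sin (5*π/2) = 1 := by
    rw [show (5*π/2 : ℝ) = π/2 + 2*π by ring, Real.sin_add_two_pi, Real.sin_pi_div_two]
  have hc2 : Real.cos (5*π/2) = 0 := by
    rw [show (5*π/2 : ℝ) = π/2 + 2*π by ring, Real.cos_add_two_pi, Real.cos_pi_div_two]
  have hsqrt2 : (1.414:ℝ) < Real.sqrt 2 := by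
    nlinarith [Real.sq_sqrt (by norm_num : (2:ℝ) ≥ 0), Real.sqrt_nonneg 2]
  have hpi1 : π > 3.1415 := by linarith [pi_gt_d6]
  have hpi2 : π < 3.1416 := by linarith [pi_lt_d6]
  -- g at the right endpoint is ≤ 0
  have hg2 : g (5*π/2) ≤ 0 := by
    simp only [hg, hs2, hc2]
    have : Real.log (5*π/2 / 1) ≥ 0 := by
      apply Real.log_nonneg; rw [div_one]; nlinarith
    nlinarith
  -- g at the left endpoint is ≥ 0
  have hg1 : 0 ≤ g (9*π/4) := by
    simp only [hg, hs1, hc1]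
    have hx0 : (0:ℝ) < 9*π/4 / (Real.sqrt 2 / 2) := by positivity
    have hlog : Real.log (9*π/4 / (Real.sqrt 2 / 2)) ≤
        2 * (Real.sqrt (9*π/4 / (Real.sqrt 2 / 2)) - 1) := by
      have h1 : Real.log (Real.sqrt (9*π/4 / (Real.sqrt 2 / 2))) =
          Real.log (9*π/4 / (Real.sqrt 2 / 2)) / 2 := Real.log_sqrt hx0.le
      have h2 := Real.log_le_sub_one_of_pos (Real.sqrt_pos.mpr hx0)
      linarith
    have h16 : Real.sqrt 16 = 4 := by
      rw [show (16:ℝ) = 4^2 by norm_num, Real.sqrt_sq (by norm_num : (0:ℝ) ≤ 4)]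
    have hsq : Real.sqrt (9*π/4 / (Real.sqrt 2 / 2)) ≤ 4 :=
      calc Real.sqrt (9*π/4 / (Real.sqrt 2 / 2)) ≤ Real.sqrt 16 := by
            apply Real.sqrt_le_sqrt
            rw [div_le_iff₀ (by positivity)]
            nlinarith
        _ = 4 := h16
    nlinarith [Real.sqrt_nonneg 2]
  -- intermediate value theorem
  have hiv := intermediate_value_Icc' hle hcont
  have h0 : (0:ℝ) ∈ Set.Icc (g (5*π/2)) (g (9*π/4)) := ⟨hg2, hg1⟩
  obtain ⟨b, hbmem, hgb⟩ := hiv h0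
  have hsb := hsin b hbmem
  have hbpos : (0:ℝ) < b := by nlinarith [hbmem.1]
  have hb1 : 1 < b / Real.sin b := by
    rw [lt_div_iff₀ hsb]
    nlinarith [Real.sin_le_one b, hbmem.1]
  refine ⟨Real.log (b / Real.sin b), b, Real.log_pos hb1, by nlinarith [hbmem.1], ?_, ?_⟩
  · rw [Real.exp_log (by positivity)]
    field_simp
  · rw [Real.exp_log (by positivity)]
    have : b * Real.cos b = (1 + Real.log (b / Real.sin b)) * Real.sin b := by
      have := hgb; simp only [hg] at this; linarith
    field_simp
    linarith [this]

theorem stmt3 :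
    ∃ a b : ℝ, 0 < a ∧ 2 * π < b ∧
      ∀ f : ℝ → ℝ, (∀ x, f x = 1 / 2 + 1 / 2 * Real.exp (-a * x) * Real.sin (b * x)) →
        ∀ x : ℝ, HasDerivAt f (f x - f (x - 1)) x ∧ f x = ∫ s in (x - 1)..x, f s := by
  obtain ⟨a, b, ha, hb2pi, hb', ha'⟩ := stmt3_root
  refine ⟨a, b, ha, hb2pi, ?_⟩
  intro f hf x
  have hfe : f = fun x => 1 / 2 + 1 / 2 * Real.exp (-a * x) * Real.sin (b * x) := funext hf
  subst hfe
  have hab : a^2 + b^2 ≠ 0 := by positivity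
  have hexp : ∀ y : ℝ, Real.exp (-a * (y - 1)) = Real.exp (-a * y) * Real.exp a := by
    intro y; rw [← Real.exp_add]; ring_nf
  have hsin : ∀ y : ℝ, Real.sin (b * (y - 1)) =
      Real.sin (b*y) * Real.cos b - Real.cos (b*y) * Real.sin b := by
    intro y; rw [show b * (y-1) = b*y - b by ring, Real.sin_sub]
  have hcos : ∀ y : ℝ, Real.cos (b * (y - 1)) =
      Real.cos (b*y) * Real.cos b + Real.sin (b*y) * Real.sin b := by
    intro y; rw [show b * (y-1) = b*y - b by ring, Real.cos_sub]
  constructor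
  · -- the delay differential equation
    have hu : HasDerivAt (fun y => Real.exp (-a * y)) (Real.exp (-a * x) * (-a)) x := by
      have := ((hasDerivAt_id x).const_mul (-a)).exp
      simpa [mul_one] using this
    have hv : HasDerivAt (fun y => Real.sin (b * y)) (Real.cos (b * x) * b) x := by
      have := ((hasDerivAt_id x).const_mul b).sin
      simpa [mul_one] using this
    have hD := (((hu.const_mul (1/2:ℝ)).mul hv).const_add (1/2:ℝ))
    refine HasDerivAt.congr_deriv hD ?_
    symm
    simp only [hexp, hsin]
    linear_combination (-(1/2) * Real.exp (-a*x) * Real.sin (b*x)) * ha'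
      + (1/2 * Real.exp (-a*x) * Real.cos (b*x)) * hb'
  · -- the moving-average integral equation
    set F : ℝ → ℝ := fun s => s/2 +
      Real.exp (-a*s) * (-(a * Real.sin (b*s)) - b * Real.cos (b*s)) / (2*(a^2+b^2)) with hF
    have hFd : ∀ s : ℝ, HasDerivAt F (1 / 2 + 1 / 2 * Real.exp (-a * s) * Real.sin (b * s)) s := by
      intro s
      have hu : HasDerivAt (fun y => Real.exp (-a * y)) (Real.exp (-a * s) * (-a)) s := by
        have := ((hasDerivAt_id s).const_mul (-a)).exp
        simpa [mul_one] using this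
      have hv : HasDerivAt (fun y => -(a * Real.sin (b * y)) - b * Real.cos (b * y))
          (-(a * (Real.cos (b*s) * b)) - b * (-(Real.sin (b*s)) * b)) s := by
        have h1 : HasDerivAt (fun y => Real.sin (b * y)) (Real.cos (b * s) * b) s := by
          have := ((hasDerivAt_id s).const_mul b).sin
          simpa [mul_one] using this
        have h2 : HasDerivAt (fun y => Real.cos (b * y)) (-(Real.sin (b * s)) * b) s := by
          have := ((hasDerivAt_id s).const_mul b).cos
          simpa [mul_one] using this
        exact ((h1.const_mul a).neg).sub (h2.const_mul b)
      have hD := ((hu.mul hv).div_const (2*(a^2+b^2))).add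
        ((hasDerivAt_id s).div_const 2)
      have hD' : HasDerivAt F
          ((Real.exp (-a*s) * (-a) * (-(a * Real.sin (b*s)) - b * Real.cos (b*s)) +
            Real.exp (-a*s) * (-(a * (Real.cos (b*s) * b)) - b * (-(Real.sin (b*s)) * b)))
              / (2*(a^2+b^2)) + 1/2) s := by
        simpa [hF, add_comm, Pi.add_def] using hD
      convert hD' using 1
      field_simp
      ring
    have hint : (∫ s in (x-1)..x, (1 / 2 + 1 / 2 * Real.exp (-a * s) * Real.sin (b * s)))
        = F x - F (x-1) := by
      apply intervalIntegral.integral_eq_sub_of_hasDerivAt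
      · intro s _; exact hFd s
      · apply Continuous.intervalIntegrable
        continuity
    rw [hint, hF]
    simp only [hexp, hsin, hcos]
    field_simp
    linear_combination (-Real.exp (-(a*x)) * (a * Real.sin (x*b) + b * Real.cos (x*b))) * ha'
      + (-Real.exp (-(a*x)) * (b * Real.sin (x*b) - a * Real.cos (x*b))) * hb'
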